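/- Let Σ be a finite nonempty alphabet and order the set Σ* of finite words over Σ by the (scattered) subword ordering ⪯. Then the set Idl(Σ*) of ideals of (Σ*, ⪯), partially ordered by inclusion (strict inclusion is well-founded since Idl(Σ*) is well-quasi-ordered by inclusion), has ordinal rank rk(Idl(Σ*)) = ω^{|Σ|} + 1. -/

import Mathlib

set_option linter.unusedSectionVars false
set_option linter.unnecessarySimpa false
set_option linter.unnecessarySeqFocus false

/-- A subset is downwards-closed if it is closed under going down. -/
def DownwardsClosed {X : Type*} [Preorder X] (D : Set X) : Prop :=
  ∀ ⦃x y : X⦄, x ≤ y → y ∈ D → x ∈ D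

/-- An ideal is a nonempty, directed, downwards-closed subset. -/
def IsIdeal {X : Type*} [Preorder X] (I : Set X) : Prop :=
  I.Nonempty ∧ DownwardsClosed I ∧
    ∀ ⦃x⦄, x ∈ I → ∀ ⦃y⦄, y ∈ I → ∃ z ∈ I, x ≤ z ∧ y ≤ z

/-- `Σ*`: finite words over `σ`, ordered by the (scattered) subword ordering. -/
def Words (σ : Type*) : Type _ := List σ

/-- The subword (subsequence) partial ordering on words. -/
instance (σ : Type*) : PartialOrder (Words σ) where
  le u v := List.Sublist u v
  le_refl u := List.Sublist.refl u
  le_trans _ _ _ h₁ h₂ := List.Sublist.trans h₁ h₂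
  le_antisymm _ _ h₁ h₂ := List.Sublist.antisymm h₁ h₂

/-- The set of ideals of `X`, partially ordered by inclusion. -/
def Idl (X : Type*) [Preorder X] : Type _ := {I : Set X // IsIdeal I}

noncomputable instance (X : Type*) [Preorder X] : PartialOrder (Idl X) :=
  Subtype.partialOrder _

/-- The ordinal rank of an element of a preorder: `rk z = sup {rk y + 1 : y < z}`
when the strict order is well-founded (and `0` otherwise, by convention). -/
noncomputable def rk {Z : Type*} [Preorder Z] (z : Z) : Ordinal :=
  @dite _ (WellFounded ((· < ·) : Z → Z → Prop)) (Classical.dec _)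
    (fun h => (h.apply z).rank) (fun _ => 0)


open List Ordinal

namespace RankWords

variable {σ : Type*}

/-! ### CNF-style values of digit functions -/

/-- `vfun m c = ω^(m-1) * c (m-1) + ... + ω^0 * c 0`. -/
noncomputable def vfun : ℕ → (ℕ → ℕ) → Ordinal
  | 0, _ => 0
  | m + 1, c => omega0 ^ (m : Ordinal) * (c m) + vfun m c

lemma vfun_congr {m : ℕ} {c d : ℕ → ℕ} (h : ∀ k < m, c k = d k) :
    vfun m c = vfun m d := by
  induction m with
  | zero => rfl
  | succ m ih =>
      simp only [vfun, h m (Nat.lt_succ_self m),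
        ih (fun k hk => h k (hk.trans (Nat.lt_succ_self m)))]

lemma omega_opow_nat_succ (m : ℕ) :
    omega0 ^ ((m+1:ℕ) : Ordinal) = omega0 ^ (m : Ordinal) * omega0 := by
  rw [opow_natCast, opow_natCast, pow_succ]

lemma vfun_lt_opow (m : ℕ) (c : ℕ → ℕ) : vfun m c < omega0 ^ (m : Ordinal) := by
  induction m with
  | zero => simpa [vfun] using zero_lt_one
  | succ m ih =>
      have h1 : vfun (m+1) c < omega0 ^ (m : Ordinal) * (c m + 1 : ℕ) := by
        simp only [vfun]
        calc omega0 ^ (m : Ordinal) * (c m) + vfun m c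
            < omega0 ^ (m : Ordinal) * (c m) + omega0 ^ (m : Ordinal) :=
              add_lt_add_right ih _
          _ = omega0 ^ (m : Ordinal) * ((c m : Ordinal) + 1) := by
              rw [mul_add, mul_one]
          _ = omega0 ^ (m : Ordinal) * ((c m + 1 : ℕ) : Ordinal) := by
              push_cast; ring_nf
      refine h1.trans_le ?_
      rw [omega_opow_nat_succ]
      exact mul_le_mul_right (Ordinal.nat_lt_omega0 _).le _

lemma vfun_lt {m : ℕ} {c d : ℕ → ℕ}
    (h : ∃ g < m, c g < d g ∧ ∀ k, g < k → k < m → c k = d k) :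
    vfun m c < vfun m d := by
  induction m with
  | zero => obtain ⟨g, hg, _⟩ := h; omega
  | succ m ih =>
      obtain ⟨g, hgm, hlt, heq⟩ := h
      rcases Nat.lt_succ_iff_lt_or_eq.1 hgm with hg | rfl
      · have htop : c m = d m := heq m hg (Nat.lt_succ_self m)
        simp only [vfun, htop]
        exact add_lt_add_right (ih ⟨g, hg, hlt, fun k h1 h2 => heq k h1 (h2.trans (Nat.lt_succ_self m))⟩) _
      · simp only [vfun]
        calc omega0 ^ (g : Ordinal) * (c g) + vfun g c
            < omega0 ^ (g : Ordinal) * (c g) + omega0 ^ (g : Ordinal) :=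
              add_lt_add_right (vfun_lt_opow g c) _
          _ = omega0 ^ (g : Ordinal) * ((c g : Ordinal) + 1) := by rw [mul_add, mul_one]
          _ ≤ omega0 ^ (g : Ordinal) * (d g) := by
              apply mul_le_mul_right
              have : (c g : ℕ) + 1 ≤ d g := hlt
              exact_mod_cast Nat.cast_le.2 this
          _ ≤ omega0 ^ (g : Ordinal) * (d g) + vfun g d := le_self_add

lemma vfun_surj : ∀ (m : ℕ) (α : Ordinal), α < omega0 ^ (m : Ordinal) →
    ∃ c : ℕ → ℕ, vfun m c = α := by
  intro m
  induction m with
  | zero => intro α hα; refine ⟨fun _ => 0, ?_⟩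
            simp only [Nat.cast_zero, opow_zero, Ordinal.lt_one_iff_zero] at hα
            simp [vfun, hα]
  | succ m ih =>
      intro α hα
      have hne : omega0 ^ (m : Ordinal) ≠ 0 := opow_ne_zero _ omega0_ne_zero
      have hq : α / omega0 ^ (m : Ordinal) < omega0 := by
        rw [Ordinal.div_lt hne, ← omega_opow_nat_succ]
        exact hα
      obtain ⟨q, hqe⟩ := Ordinal.lt_omega0.1 hq
      obtain ⟨c', hc'⟩ := ih (α % omega0 ^ (m : Ordinal)) (Ordinal.mod_lt α hne)
      classical
      refine ⟨Function.update c' m q, ?_⟩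
      have hcongr : vfun m (Function.update c' m q) = vfun m c' :=
        vfun_congr (fun k hk => Function.update_of_ne (Nat.ne_of_lt hk) _ _)
      have : vfun (m+1) (Function.update c' m q)
          = omega0 ^ (m : Ordinal) * q + vfun m c' := by
        simp only [vfun, Function.update_self]
        rw [hcongr]
      rw [this, hc', ← hqe]
      exact Ordinal.div_add_mod α _

/-! ### Atoms and products -/

variable [DecidableEq σ]

/-- Atoms of the ideal decomposition: `Γ*` or `{ε, a}`. -/
inductive Atom (σ : Type*) where
  | star (Γ : Finset σ) : Atom σ
  | letter (a : σ) : Atom σ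

/-- The set of words denoted by an atom. -/
def Aset : Atom σ → Set (List σ)
  | Atom.star Γ => {w | ∀ a ∈ w, a ∈ Γ}
  | Atom.letter a => {w | w.Sublist [a]}

/-- The degree of an atom. -/
def deg : Atom σ → ℕ
  | Atom.star Γ => Γ.card
  | Atom.letter _ => 0

/-- The set of words denoted by a product (list) of atoms. -/
def Pset : List (Atom σ) → Set (List σ)
  | [] => {w | w = []}
  | A :: R => {w | ∃ x y, x ∈ Aset A ∧ y ∈ Pset R ∧ w = x ++ y}

lemma nil_mem_Aset (A : Atom σ) : [] ∈ Aset A := by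
  cases A with
  | star Γ => intro a ha; cases ha
  | letter a => exact List.nil_sublist _

lemma Aset_down {A : Atom σ} {x y : List σ} (h : x.Sublist y) (hy : y ∈ Aset A) :
    x ∈ Aset A := by
  cases A with
  | star Γ => intro a ha; exact hy a (h.mem ha)
  | letter a => exact h.trans hy

lemma nil_mem_Pset (P : List (Atom σ)) : [] ∈ Pset P := by
  induction P with
  | nil => rfl
  | cons A R ih => exact ⟨[], [], nil_mem_Aset A, ih, rfl⟩

lemma Pset_down {P : List (Atom σ)} {x y : List σ} (h : x.Sublist y) (hy : y ∈ Pset P) :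
    x ∈ Pset P := by
  induction P generalizing x y with
  | nil => cases hy; exact List.sublist_nil.1 h
  | cons A R ih =>
      obtain ⟨u, v, hu, hv, rfl⟩ := hy
      obtain ⟨x₁, x₂, rfl, h₁, h₂⟩ := List.sublist_append_iff.1 h
      exact ⟨x₁, x₂, Aset_down h₁ hu, ih h₂ hv, rfl⟩

lemma mem_Pset_append {P Q : List (Atom σ)} {x y : List σ}
    (hx : x ∈ Pset P) (hy : y ∈ Pset Q) : x ++ y ∈ Pset (P ++ Q) := by
  induction P generalizing x with
  | nil => cases hx; exact hy
  | cons A R ih =>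
      obtain ⟨u, v, hu, hv, rfl⟩ := hx
      exact ⟨u, v ++ y, hu, ih hv, by simp⟩

lemma mem_Pset_append_iff {P Q : List (Atom σ)} {w : List σ} :
    w ∈ Pset (P ++ Q) ↔ ∃ x y, x ∈ Pset P ∧ y ∈ Pset Q ∧ w = x ++ y := by
  constructor
  · intro h
    induction P generalizing w with
    | nil => exact ⟨[], w, rfl, h, rfl⟩
    | cons A R ih =>
        obtain ⟨u, v, hu, hv, rfl⟩ := h
        obtain ⟨x, y, hx, hy, rfl⟩ := ih hv
        exact ⟨u ++ x, y, ⟨u, x, hu, hx, rfl⟩, hy, by simp⟩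
  · rintro ⟨x, y, hx, hy, rfl⟩; exact mem_Pset_append hx hy

lemma mem_Pset_left {P Q : List (Atom σ)} {x : List σ} (hx : x ∈ Pset P) :
    x ∈ Pset (P ++ Q) := by
  simpa using mem_Pset_append hx (nil_mem_Pset Q)

lemma mem_Pset_right {P Q : List (Atom σ)} {x : List σ} (hx : x ∈ Pset Q) :
    x ∈ Pset (P ++ Q) := by
  simpa using mem_Pset_append (nil_mem_Pset P) hx

/-- Products of atoms are directed. -/
lemma Pset_directed {P : List (Atom σ)} {x y : List σ}
    (hx : x ∈ Pset P) (hy : y ∈ Pset P) :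
    ∃ z ∈ Pset P, x.Sublist z ∧ y.Sublist z := by
  induction P generalizing x y with
  | nil => cases hx; cases hy; exact ⟨[], rfl, List.Sublist.refl _, List.Sublist.refl _⟩
  | cons A R ih =>
      obtain ⟨u, v, hu, hv, rfl⟩ := hx
      obtain ⟨u', v', hu', hv', rfl⟩ := hy
      obtain ⟨z, hz, h1, h2⟩ := ih hv hv'
      cases A with
      | star Γ =>
          refine ⟨(u ++ u') ++ z, ⟨u ++ u', z, ?_, hz, rfl⟩, ?_, ?_⟩
          · intro a ha; rcases List.mem_append.1 ha with h | h
            exacts [hu a h, hu' a h]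
          · exact List.Sublist.append (List.sublist_append_left _ _) h1
          · exact List.Sublist.append (List.sublist_append_right _ _) h2
      | letter a =>
          rcases List.sublist_singleton.1 hu with rfl | rfl
          · rcases List.sublist_singleton.1 hu' with rfl | rfl
            · exact ⟨[] ++ z, ⟨[], z, List.nil_sublist _, hz, rfl⟩, h1, h2⟩
            · exact ⟨[a] ++ z, ⟨[a], z, List.Sublist.refl _, hz, rfl⟩,
                ((List.nil_sublist [a]).append h1), List.Sublist.append (List.Sublist.refl _) h2⟩
          · refine ⟨[a] ++ z, ⟨[a], z, List.Sublist.refl _, hz, rfl⟩,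
              List.Sublist.append (List.Sublist.refl _) h1, ?_⟩
            rcases List.sublist_singleton.1 hu' with rfl | rfl
            · exact (List.nil_sublist [a]).append h2
            · exact List.Sublist.append (List.Sublist.refl _) h2

/-- Count of atoms of a given degree. -/
def dcount (P : List (Atom σ)) (k : ℕ) : ℕ := P.countP (fun A => deg A = k)

lemma dcount_append (P Q : List (Atom σ)) (k : ℕ) :
    dcount (P ++ Q) k = dcount P k + dcount Q k := List.countP_append

lemma dcount_cons (A : Atom σ) (R : List (Atom σ)) (k : ℕ) :
    dcount (A :: R) k = (if deg A = k then 1 else 0) + dcount R k := by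
  simp only [dcount, List.countP_cons]
  by_cases h : deg A = k <;> simp [h] <;> omega

/-- Strict lexicographic decrease of degree counts. -/
def CLt (P' P : List (Atom σ)) : Prop :=
  ∃ g, dcount P' g < dcount P g ∧ ∀ k, g < k → dcount P' k = dcount P k

lemma CLt_cons {P' P : List (Atom σ)} (A : Atom σ) (h : CLt P' P) :
    CLt (A :: P') (A :: P) := by
  obtain ⟨g, h1, h2⟩ := h
  exact ⟨g, by rw [dcount_cons, dcount_cons]; omega,
    fun k hk => by rw [dcount_cons, dcount_cons, h2 k hk]⟩

lemma CLt_replace {L R : List (Atom σ)} {A : Atom σ}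
    (h : ∀ B ∈ L, deg B < deg A) : CLt (L ++ R) (A :: R) := by
  refine ⟨deg A, ?_, fun k hk => ?_⟩
  · rw [dcount_append, dcount_cons, if_pos rfl]
    have : dcount L (deg A) = 0 := by
      rw [dcount, List.countP_eq_zero]
      intro B hB
      simp only [decide_eq_true_eq]
      exact Nat.ne_of_lt (h B hB)
    omega
  · rw [dcount_append, dcount_cons, if_neg (by omega)]
    have : dcount L k = 0 := by
      rw [dcount, List.countP_eq_zero]
      intro B hB
      simp only [decide_eq_true_eq]
      have := h B hB; omega
    omega

/-! ### Complements of upward closures inside products -/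

lemma exists_first_occ {x : List σ} {c : σ} (h : c ∈ x) :
    ∃ x₁ x₂, x = x₁ ++ c :: x₂ ∧ c ∉ x₁ := by
  induction x with
  | nil => cases h
  | cons b t ih =>
      by_cases hbc : b = c
      · subst hbc; exact ⟨[], t, rfl, by simp⟩
      · have hct : c ∈ t := by
          rcases List.mem_cons.1 h with h' | h'
          · exact absurd h'.symm hbc
          · exact h'
        obtain ⟨x₁, x₂, he, hc⟩ := ih hct
        exact ⟨b :: x₁, x₂, by rw [he]; rfl, by simp [hc, Ne.symm hbc]⟩

/-- The products covering `Γ* ∖ ↑w`. -/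
def Qlist (Γ : Finset σ) : List σ → ℕ → List (Atom σ)
  | [], _ => []
  | c :: _, 0 => [Atom.star (Γ.erase c)]
  | c :: w, i + 1 => Atom.star (Γ.erase c) :: Atom.letter c :: Qlist Γ w i

lemma Qlist_deg {Γ : Finset σ} {w : List σ} (hw : ∀ a ∈ w, a ∈ Γ) :
    ∀ i, ∀ B ∈ Qlist Γ w i, deg B < Γ.card := by
  induction w with
  | nil => intro i B hB; cases hB
  | cons c w ih =>
      have hc : c ∈ Γ := hw c List.mem_cons_self
      have hcard : (Γ.erase c).card < Γ.card := Finset.card_erase_lt_of_mem hc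
      have hpos : 0 < Γ.card := Finset.card_pos.2 ⟨c, hc⟩
      intro i B hB
      cases i with
      | zero =>
          simp only [Qlist, List.mem_singleton] at hB
          subst hB; exact hcard
      | succ i =>
          simp only [Qlist, List.mem_cons] at hB
          rcases hB with rfl | rfl | hB
          · exact hcard
          · exact hpos
          · exact ih (fun a ha => hw a (List.mem_cons_of_mem c ha)) i B hB

/-- Lemma G: a word of `Γ*` avoiding `w` lies in one of the `Qlist` products. -/
lemma star_avoid_mem_Qlist {Γ : Finset σ} :
    ∀ (w x : List σ), (∀ a ∈ x, a ∈ Γ) → ¬ w.Sublist x →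
      ∃ i < w.length, x ∈ Pset (Qlist Γ w i) := by
  intro w
  induction w with
  | nil => intro x _ h; exact absurd (List.nil_sublist x) h
  | cons c w ih =>
      intro x hx h
      by_cases hc : c ∈ x
      · obtain ⟨x₁, x₂, rfl, hc1⟩ := exists_first_occ hc
        have h2 : ¬ w.Sublist x₂ := by
          intro hs
          exact h (List.Sublist.trans (List.cons_sublist_cons.2 hs)
            (List.sublist_append_right x₁ (c :: x₂)))
        have hx₂ : ∀ a ∈ x₂, a ∈ Γ := fun a ha =>
          hx a (by simp [List.mem_append, ha])
        obtain ⟨i, hi, hmem⟩ := ih x₂ hx₂ h2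
        refine ⟨i + 1, by simpa using Nat.succ_lt_succ hi, ?_⟩
        refine ⟨x₁, c :: x₂, ?_, ⟨[c], x₂, List.Sublist.refl _, hmem, rfl⟩, rfl⟩
        intro a ha
        exact Finset.mem_erase.2 ⟨fun he => hc1 (he ▸ ha), hx a (by simp [ha])⟩
      · refine ⟨0, Nat.succ_pos _, ?_⟩
        refine ⟨x, [], ?_, rfl, by simp⟩
        intro a ha
        exact Finset.mem_erase.2 ⟨fun he => hc (he ▸ ha), hx a ha⟩

/-- The key covering lemma: the part of a product avoiding one of its members is
covered by finitely many products with lexicographically smaller degree counts. -/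
lemma cover_lemma :
    ∀ (P : List (Atom σ)) (w : List σ), w ∈ Pset P →
      ∃ F : List (List (Atom σ)),
        (∀ x ∈ Pset P, ¬ w.Sublist x → ∃ P' ∈ F, x ∈ Pset P') ∧
        ∀ P' ∈ F, CLt P' P := by
  intro P
  induction P with
  | nil =>
      intro w hw
      refine ⟨[], fun x hx hs => ?_, by simp⟩
      cases hw; cases hx; exact absurd (List.Sublist.refl _) hs
  | cons A R ih =>
      intro w hw
      obtain ⟨u, v, hu, hv, hw'⟩ := hw
      -- for each split position `i` of `w`, a finite family `F i`
      have key : ∀ i < w.length, ∃ Fi : List (List (Atom σ)),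
          (∀ x₁ x₂, x₁ ∈ Aset A → x₂ ∈ Pset R →
            ¬ (w.take (i+1)).Sublist x₁ → ¬ (w.drop i).Sublist x₂ →
              ∃ P' ∈ Fi, x₁ ++ x₂ ∈ Pset P') ∧
          ∀ P' ∈ Fi, CLt P' (A :: R) := by
        intro i hi
        by_cases hiu : i < u.length
        · -- the prefix `w.take (i+1)` lies in `Aset A`
          have hpc : (w.take (i+1)).Sublist u := by
            rw [hw']
            have : (u ++ v).take (i+1) = u.take (i+1) := List.take_append_of_le_length hiu
            rw [this]
            exact List.take_sublist _ _
          have hpcA : w.take (i+1) ∈ Aset A := Aset_down hpc hu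
          cases A with
          | star Γ =>
              refine ⟨(List.range (i+1+1)).map (fun i' => Qlist Γ (w.take (i+1)) i' ++ R),
                ?_, ?_⟩
              · intro x₁ x₂ hx₁ hx₂ hs1 _
                obtain ⟨i', hi', hmem⟩ := star_avoid_mem_Qlist (w.take (i+1)) x₁ hx₁ hs1
                refine ⟨Qlist Γ (w.take (i+1)) i' ++ R, ?_, mem_Pset_append hmem hx₂⟩
                simp only [List.mem_map, List.mem_range]
                refine ⟨i', ?_, rfl⟩
                have : (w.take (i+1)).length ≤ i + 1 := by simp
                omega
              · intro P' hP'
                simp only [List.mem_map, List.mem_range] at hP'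
                obtain ⟨i', _, rfl⟩ := hP'
                exact CLt_replace (Qlist_deg hpcA i')
          | letter a =>
              refine ⟨[R], ?_, ?_⟩
              · intro x₁ x₂ hx₁ hx₂ hs1 _
                have htake : w.take (i+1) = [a] := by
                  have hne : w.take (i+1) ≠ [] := by
                    intro he
                    rw [he] at hs1
                    exact hs1 (List.nil_sublist _)
                  rcases List.sublist_singleton.1 hpcA with he | he
                  · exact absurd he hne
                  · exact he
                have hx₁nil : x₁ = [] := by
                  rcases List.sublist_singleton.1 hx₁ with he | he
                  · exact he
                  · exfalso; rw [htake, he] at hs1; exact hs1 (List.Sublist.refl _)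
                refine ⟨R, by simp, ?_⟩
                rw [hx₁nil]; exact hx₂
              · intro P' hP'
                simp only [List.mem_singleton] at hP'
                rw [hP']
                have : CLt (([] : List (Atom σ)) ++ R) (Atom.letter a :: R) :=
                  CLt_replace (by intro B hB; cases hB)
                simpa using this
        · -- the suffix `w.drop i` lies in `Pset R`
          have hcs : (w.drop i).Sublist v := by
            rw [hw']
            have : (u ++ v).drop i = v.drop (i - u.length) := by
              rw [List.drop_append]
              have : u.drop i = [] := List.drop_eq_nil_of_le (by omega)
              simp [this]
            rw [this]
            exact List.drop_sublist _ _
          have hcsR : w.drop i ∈ Pset R := Pset_down hcs hv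
          obtain ⟨F', hF'1, hF'2⟩ := ih (w.drop i) hcsR
          refine ⟨F'.map (A :: ·), ?_, ?_⟩
          · intro x₁ x₂ hx₁ hx₂ _ hs2
            obtain ⟨P', hP', hmem⟩ := hF'1 x₂ hx₂ hs2
            exact ⟨A :: P', List.mem_map_of_mem (f := (A :: ·)) hP', ⟨x₁, x₂, hx₁, hmem, rfl⟩⟩
          · intro P' hP'
            simp only [List.mem_map] at hP'
            obtain ⟨P'', hP'', rfl⟩ := hP'
            exact CLt_cons A (hF'2 P'' hP'')
      choose Fi hFi1 hFi2 using key
      -- assemble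
      refine ⟨(List.range w.length).attach.map
        (fun i => Fi i.1 (List.mem_range.1 i.2))|>.flatten, ?_, ?_⟩
      · intro x hx hs
        obtain ⟨x₁, x₂, hx₁, hx₂, rfl⟩ := hx
        -- maximal prefix of `w` embedding into `x₁`
        set j := Nat.findGreatest (fun j => (w.take j).Sublist x₁) w.length with hj
        have hPj : (w.take j).Sublist x₁ :=
          Nat.findGreatest_spec (P := fun j => (w.take j).Sublist x₁)
            (Nat.zero_le _) (by simp)
        have hjlt : j < w.length := by
          rcases Nat.lt_or_ge j w.length with h | h
          · exact h
          · exfalso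
            have hjle : j ≤ w.length := Nat.findGreatest_le _
            have : j = w.length := le_antisymm hjle h
            rw [this, List.take_length] at hPj
            exact hs (hPj.trans (List.sublist_append_left x₁ x₂))
        have hs1 : ¬ (w.take (j+1)).Sublist x₁ :=
          Nat.findGreatest_is_greatest (Nat.lt_succ_self j) hjlt
        have hs2 : ¬ (w.drop j).Sublist x₂ := by
          intro h
          exact hs (by
            have := List.Sublist.append hPj h
            rwa [List.take_append_drop] at this)
        obtain ⟨P', hP', hmem⟩ := hFi1 j hjlt x₁ x₂ hx₁ hx₂ hs1 hs2
        refine ⟨P', ?_, hmem⟩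
        simp only [List.mem_flatten, List.mem_map, List.mem_attach]
        exact ⟨Fi j hjlt, ⟨⟨j, List.mem_range.2 hjlt⟩, by simp, rfl⟩, hP'⟩
      · intro P' hP'
        simp only [List.mem_flatten, List.mem_map] at hP'
        obtain ⟨L, ⟨⟨i, hi⟩, _, rfl⟩, hP'⟩ := hP'
        exact hFi2 _ _ P' hP'

/-! ### Ideals of the subword order -/

lemma words_le_iff {u v : Words σ} : u ≤ v ↔ List.Sublist u v := Iff.rfl

lemma isIdeal_Pset (P : List (Atom σ)) : IsIdeal (X := Words σ) (Pset P) := by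
  refine ⟨⟨[], nil_mem_Pset P⟩, fun x y hxy hy => Pset_down hxy hy,
    fun x hx y hy => Pset_directed hx hy⟩

lemma ideal_subset_of_subset_union {I : Set (Words σ)} (hI : IsIdeal I)
    (F : List (List (Atom σ))) (h : ∀ x ∈ I, ∃ P ∈ F, x ∈ Pset P) :
    ∃ P ∈ F, I ⊆ Pset P := by
  induction F with
  | nil =>
      obtain ⟨x, hx⟩ := hI.1
      obtain ⟨P, hP, _⟩ := h x hx
      cases hP
  | cons D F' ih =>
      by_cases hD : I ⊆ Pset D
      · exact ⟨D, List.mem_cons_self, hD⟩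
      · replace hD := Set.not_subset.1 hD
        obtain ⟨x₀, hx₀, hx₀D⟩ := hD
        have h' : ∀ y ∈ I, ∃ P ∈ F', y ∈ Pset P := by
          intro y hy
          obtain ⟨z, hz, h1, h2⟩ := hI.2.2 hx₀ hy
          obtain ⟨P, hP, hzP⟩ := h z hz
          rcases List.mem_cons.1 hP with rfl | hP
          · exact absurd (Pset_down h1 hzP) hx₀D
          · exact ⟨P, hP, Pset_down h2 hzP⟩
        obtain ⟨P, hP, hsub⟩ := ih h'
        exact ⟨P, List.mem_cons_of_mem D hP, hsub⟩

/-! ### Well-foundedness of `Idl (Words σ)` -/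

lemma higman [Fintype σ] :
    ∀ f : ℕ → List σ, ∃ m n : ℕ, m < n ∧ (f m).Sublist (f n) := by
  intro f
  have hbase : (Set.univ : Set σ).PartiallyWellOrderedOn (· = ·) :=
    Set.Finite.partiallyWellOrderedOn Set.finite_univ
  have hh := hbase.partiallyWellOrderedOn_sublistForall₂ (r := (· = ·))
  obtain ⟨m, n, hmn, hr⟩ := hh (fun n => ⟨f n, fun x _ => Set.mem_univ x⟩)
  refine ⟨m, n, hmn, ?_⟩
  obtain ⟨l, hl1, hl2⟩ := List.sublistForall₂_iff.1 hr
  have heq : f m = l := by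
    have h := List.forall₂_eq_eq_eq (α := σ)
    rw [h] at hl1
    exact hl1
  exact heq ▸ hl2

lemma wf_idl [Fintype σ] :
    WellFounded ((· < ·) : Idl (Words σ) → Idl (Words σ) → Prop) := by
  rw [RelEmbedding.wellFounded_iff_isEmpty]
  constructor
  intro emb
  have hlt : ∀ n : ℕ, (emb (n+1)).1 ⊂ (emb n).1 := by
    intro n
    have h : emb (n+1) < emb n := emb.map_rel_iff.2 (Nat.lt_succ_self n)
    exact lt_iff_le_not_ge.2 ⟨h.le, h.not_ge⟩
  have hmono0 : ∀ m k : ℕ, (emb (m+k)).1 ⊆ (emb m).1 := by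
    intro m k
    induction k with
    | zero => exact Set.Subset.rfl
    | succ k ih =>
        have h1 : (emb (m + (k+1))).1 ⊆ (emb (m+k)).1 := by
          have := (hlt (m+k)).1
          rwa [Nat.add_succ]
        exact h1.trans ih
  have hmono : ∀ m n : ℕ, m ≤ n → (emb n).1 ⊆ (emb m).1 := by
    intro m n hmn
    have := hmono0 m (n - m)
    rwa [Nat.add_sub_cancel' hmn] at this
  have hw : ∀ n : ℕ, ∃ x : Words σ, x ∈ (emb n).1 ∧ x ∉ (emb (n+1)).1 := by
    intro n
    obtain ⟨x, hx1, hx2⟩ := Set.exists_of_ssubset (hlt n)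
    exact ⟨x, hx1, hx2⟩
  choose g hg1 hg2 using hw
  obtain ⟨m, n, hmn, hsub⟩ := higman g
  have : g n ∈ (emb (m+1)).1 := hmono (m+1) n hmn (hg1 n)
  exact hg2 m ((emb (m+1)).2.2.1 hsub this)

/-! ### The rank upper bound -/

lemma idl_le_iff {I J : Idl (Words σ)} : I ≤ J ↔ I.1 ⊆ J.1 := Iff.rfl

lemma idl_lt_iff {I J : Idl (Words σ)} : I < J ↔ I.1 ⊂ J.1 := by
  rw [lt_iff_le_not_ge, ssubset_iff_subset_not_subset]
  exact and_congr idl_le_iff (not_congr idl_le_iff)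

lemma vfun_zero : ∀ m : ℕ, vfun m (fun _ => 0) = 0
  | 0 => rfl
  | m + 1 => by simp [vfun, vfun_zero m]

section UpperBound

variable [Fintype σ]

/-- The ordinal value of a product of atoms. -/
noncomputable def pval (P : List (Atom σ)) : Ordinal :=
  vfun (Fintype.card σ + 1) (dcount P)

lemma deg_le (A : Atom σ) : deg A ≤ Fintype.card σ := by
  cases A with
  | star Γ => exact Finset.card_le_univ Γ
  | letter a => exact Nat.zero_le _

lemma pval_lt_of_CLt {P' P : List (Atom σ)} (h : CLt P' P) : pval P' < pval P := by
  obtain ⟨g, h1, h2⟩ := h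
  refine vfun_lt ⟨g, ?_, h1, fun k hk _ => h2 k hk⟩
  have : 0 < dcount P g := by omega
  rw [dcount, List.countP_pos_iff] at this
  obtain ⟨A, hA, hA2⟩ := this
  simp only [decide_eq_true_eq] at hA2
  have := deg_le A
  omega

lemma pval_top :
    pval ([Atom.star (Finset.univ : Finset σ)]) = omega0 ^ (Fintype.card σ : Ordinal) := by
  set n := Fintype.card σ with hn
  have hdeg : deg (Atom.star (Finset.univ : Finset σ)) = n := Finset.card_univ
  have hc : ∀ k, dcount [Atom.star (Finset.univ : Finset σ)] k
      = if n = k then 1 else 0 := by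
    intro k
    rw [dcount, List.countP_cons, List.countP_nil, hdeg]
    by_cases h : n = k <;> simp [h]
  rw [pval]
  have h1 : vfun (n+1) (dcount [Atom.star (Finset.univ : Finset σ)])
      = omega0 ^ (n : Ordinal) * 1 + vfun n (dcount [Atom.star (Finset.univ : Finset σ)]) := by
    rw [vfun, hc n, if_pos rfl, Nat.cast_one]
  have h2 : vfun n (dcount [Atom.star (Finset.univ : Finset σ)]) = 0 := by
    rw [vfun_congr (d := fun _ => 0) (fun k hk => by rw [hc k, if_neg (by omega)]),
      vfun_zero]
  rw [h1, h2, mul_one, add_zero]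

lemma Pset_top (x : List σ) : x ∈ Pset ([Atom.star (Finset.univ : Finset σ)]) :=
  ⟨x, [], fun a _ => Finset.mem_univ a, rfl, by simp⟩

lemma rank_le_pval :
    ∀ (o : Ordinal) (P : List (Atom σ)), pval P = o →
      ∀ I : Idl (Words σ), I.1 ⊆ Pset P → ((wf_idl (σ := σ)).apply I).rank ≤ o := by
  intro o
  induction o using Ordinal.induction with
  | h o IH =>
      intro P hP I hIP
      rw [Acc.rank_eq]
      apply Ordinal.iSup_le
      rintro ⟨J, hJ⟩
      rw [Order.succ_le_iff]
      have hss : J.1 ⊂ I.1 := idl_lt_iff.1 hJ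
      obtain ⟨w, hwI, hwJ⟩ := Set.exists_of_ssubset hss
      have hwP : w ∈ Pset P := hIP hwI
      obtain ⟨F, hF1, hF2⟩ := cover_lemma P w hwP
      have hcov : ∀ x ∈ J.1, ∃ P' ∈ F, x ∈ Pset P' := by
        intro x hx
        refine hF1 x (hIP (hss.1 hx)) ?_
        intro hsub
        exact hwJ (J.2.2.1 (show (w : Words σ) ≤ x from hsub) hx)
      obtain ⟨P', hP'F, hJP'⟩ := ideal_subset_of_subset_union J.2 F hcov
      have hlt : pval P' < o := hP ▸ pval_lt_of_CLt (hF2 P' hP'F)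
      exact lt_of_le_of_lt (IH _ hlt P' rfl J hJP') hlt

lemma rank_le_top (I : Idl (Words σ)) :
    ((wf_idl (σ := σ)).apply I).rank ≤ omega0 ^ (Fintype.card σ : Ordinal) :=
  rank_le_pval _ _ pval_top I (fun x _ => Pset_top x)

end UpperBound

/-! ### The lower bound: a chain of ideals of order type `ω^n` -/

section LowerBound

variable [Fintype σ] [Nonempty σ]

/-- The `k`-th letter of the alphabet. -/
noncomputable def aL (k : ℕ) : σ :=
  if h : k < Fintype.card σ then (Fintype.equivFin σ).symm ⟨k, h⟩ else Classical.arbitrary σ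

/-- The first `t` letters of the alphabet. -/
noncomputable def Γt (t : ℕ) : Finset σ :=
  Finset.univ.filter (fun s => ((Fintype.equivFin σ) s : ℕ) < t)

lemma mem_Γt {s : σ} {t : ℕ} : s ∈ Γt t ↔ ((Fintype.equivFin σ) s : ℕ) < t := by
  simp [Γt]

lemma eF_aL {k : ℕ} (h : k < Fintype.card σ) :
    ((Fintype.equivFin σ) (aL k) : ℕ) = k := by
  rw [aL, dif_pos h]; simp

lemma aL_mem_Γt {k t : ℕ} (hk : k < Fintype.card σ) (hkt : k < t) : aL (σ := σ) k ∈ Γt t := by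
  rw [mem_Γt, eF_aL hk]; exact hkt

lemma aL_not_mem_Γt {t : ℕ} (ht : t < Fintype.card σ) : aL (σ := σ) t ∉ Γt t := by
  rw [mem_Γt, eF_aL ht]; omega

lemma Γt_mono {t t' : ℕ} (h : t ≤ t') : Γt (σ := σ) t ⊆ Γt t' := by
  intro s hs; rw [mem_Γt] at hs ⊢; omega

/-- The basic block at level `t`. -/
noncomputable def Bt (t : ℕ) : List (Atom σ) := [Atom.star (Γt t), Atom.letter (aL t)]

/-- `m`-fold repetition of a product. -/
def rep (L : List (Atom σ)) : ℕ → List (Atom σ)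
  | 0 => []
  | m + 1 => L ++ rep L m

/-- The product of blocks given by a digit vector, levels `t-1` down to `0`. -/
noncomputable def gP (c : ℕ → ℕ) : ℕ → List (Atom σ)
  | 0 => []
  | t + 1 => rep (Bt t) (c t) ++ gP c t

lemma rep_add (L : List (Atom σ)) (m₁ m₂ : ℕ) :
    rep L (m₁ + m₂) = rep L m₁ ++ rep L m₂ := by
  induction m₁ with
  | zero => simp [rep]
  | succ m₁ ih => rw [Nat.succ_add]; simp [rep, ih]

lemma rep_succ' (L : List (Atom σ)) (m : ℕ) : rep L (m + 1) = rep L m ++ L := by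
  rw [rep_add]; simp [rep]

lemma rep_mono_mem {L : List (Atom σ)} {x : List σ} {m m' : ℕ} (h : m ≤ m')
    (hx : x ∈ Pset (rep L m)) : x ∈ Pset (rep L m') := by
  have : rep L m' = rep L m ++ rep L (m' - m) := by rw [← rep_add]; congr 1; omega
  rw [this]
  exact mem_Pset_left hx

lemma star_mem_Bt {t : ℕ} {x : List σ} (hx : ∀ a ∈ x, a ∈ Γt t) :
    x ∈ Pset (Bt (σ := σ) t) :=
  ⟨x, [], hx, ⟨[], [], List.nil_sublist _, rfl, rfl⟩, by simp⟩

lemma rep_Bt_letters {t : ℕ} (ht : t < Fintype.card σ) : ∀ (m : ℕ),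
    ∀ x ∈ Pset (rep (Bt (σ := σ) t) m), ∀ a ∈ x, a ∈ Γt (t+1) := by
  intro m
  induction m with
  | zero => intro x hx a ha; cases hx; cases ha
  | succ m ihm =>
      intro x hx a ha
      obtain ⟨p, q, hp, hq, rfl⟩ := mem_Pset_append_iff.1 (hx : x ∈ Pset (Bt t ++ rep (Bt t) m))
      rcases List.mem_append.1 ha with ha | ha
      · obtain ⟨u, z, hu, hz, rfl⟩ := hp
        obtain ⟨y, r, hy, hr, rfl⟩ := hz
        cases hr
        rcases List.mem_append.1 ha with ha | ha
        · exact Γt_mono (Nat.le_succ t) (hu a ha)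
        · rcases List.mem_append.1 ha with ha | ha
          · have h2 := hy.mem ha
            rw [List.mem_singleton] at h2
            subst h2
            exact aL_mem_Γt (by omega) (Nat.lt_succ_self t)
          · cases ha
      · exact ihm q hq a ha

/-- All letters of a word of `gP c t` are among the first `t` letters. -/
lemma gP_letters {c : ℕ → ℕ} : ∀ t, t ≤ Fintype.card σ →
    ∀ x ∈ Pset (gP (σ := σ) c t), ∀ a ∈ x, a ∈ Γt t := by
  intro t
  induction t with
  | zero => intro _ x hx a ha; cases hx; cases ha
  | succ t ih =>
      intro ht x hx a ha
      obtain ⟨hi, lo, hhi, hlo, rfl⟩ := mem_Pset_append_iff.1 hx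
      rcases List.mem_append.1 ha with ha | ha
      · exact rep_Bt_letters (by omega) (c t) hi hhi a ha
      · exact Γt_mono (Nat.le_succ t) (ih (by omega) lo hlo a ha)

lemma gP_no_top {c : ℕ → ℕ} {t : ℕ} (ht : t < Fintype.card σ)
    {x : List σ} (hx : x ∈ Pset (gP (σ := σ) c t)) : aL t ∉ x := by
  intro hmem
  exact aL_not_mem_Γt ht (Γt_mono le_rfl (gP_letters t (by omega) x hx (aL t) hmem))

/-- Monotonicity: lexicographically larger digit vectors give larger products. -/
lemma gP_mono {c d : ℕ → ℕ} {t : ℕ} (ht : t < Fintype.card σ) (hcd : c t < d t)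
    (heq : ∀ k, t < k → k < Fintype.card σ → c k = d k) :
    ∀ m, t < m → m ≤ Fintype.card σ →
      Pset (gP (σ := σ) c m) ⊆ Pset (gP d m) := by
  intro m
  induction m with
  | zero => omega
  | succ m ih =>
      intro htm hmn x hx
      obtain ⟨hi, lo, hhi, hlo, rfl⟩ := mem_Pset_append_iff.1 hx
      by_cases htm' : t < m
      · -- the top block is unchanged
        have hcm : c m = d m := heq m htm' (by omega)
        rw [hcm] at hhi
        exact mem_Pset_append hhi (ih htm' (by omega) hlo)
      · -- t = m : absorb the lower part into one extra block
        have htm'' : t = m := by omega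
        subst htm''
        have hlo' : lo ∈ Pset (Bt (σ := σ) t) :=
          star_mem_Bt (fun a ha => gP_letters t (by omega) lo hlo a ha)
        have hx' : hi ++ lo ∈ Pset (rep (Bt (σ := σ) t) (c t + 1)) := by
          rw [rep_succ']
          exact mem_Pset_append hhi hlo'
        have hx'' : hi ++ lo ∈ Pset (rep (Bt (σ := σ) t) (d t)) :=
          rep_mono_mem (by omega) hx'
        exact mem_Pset_left hx''

/-- Stripping lemma: counting occurrences of the top letter. -/
lemma strip {t : ℕ} (ht : t < Fintype.card σ) {Q : List (Atom σ)}
    (hQ : ∀ x ∈ Pset Q, aL t ∉ x) :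
    ∀ (cc dd : ℕ) (W' : List σ), aL t ∉ W' →
      (List.replicate dd (aL t) ++ W') ∈ Pset (rep (Bt (σ := σ) t) cc ++ Q) →
      dd < cc ∨ (dd = cc ∧ W' ∈ Pset Q) := by
  intro cc
  induction cc with
  | zero =>
      intro dd W' hW h
      simp only [rep, List.nil_append] at h
      cases dd with
      | zero => exact Or.inr ⟨rfl, by simpa using h⟩
      | succ e =>
          exfalso
          refine hQ _ h ?_
          simp [List.mem_append]
  | succ cc ih =>
      intro dd W' hW h
      cases dd with
      | zero => exact Or.inl (Nat.succ_pos cc)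
      | succ e =>
          -- decompose along the first block
          have h' : List.replicate (e+1) (aL t) ++ W'
              ∈ Pset (Atom.star (Γt t) :: Atom.letter (aL t) :: (rep (Bt (σ := σ) t) cc ++ Q)) := by
            simpa [rep, Bt] using h
          obtain ⟨u, z, hu, hz, he⟩ := h'
          obtain ⟨y, r, hy, hr, rfl⟩ := hz
          have hu0 : u = [] := by
            cases u with
            | nil => rfl
            | cons b u' =>
                exfalso
                have hb : b = aL t := by
                  have := congrArg (fun l => l.head?) he
                  simpa [List.replicate_succ] using this.symm
                have : b ∈ Γt t := hu b List.mem_cons_self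
                rw [hb] at this
                exact aL_not_mem_Γt ht this
          subst hu0
          simp only [List.nil_append] at he
          rcases List.sublist_singleton.1 hy with rfl | rfl
          · -- the letter slot is empty
            simp only [List.nil_append] at he
            subst he
            rcases ih (e+1) W' hW hr with h1 | h1
            · exact Or.inl (by omega)
            · exact Or.inl (by omega)
          · -- the letter slot holds `aL t`
            rw [List.replicate_succ, List.singleton_append] at he
            injection he with _ he2
            subst he2
            rcases ih e W' hW hr with h1 | ⟨h1, h2⟩
            · exact Or.inl (by omega)
            · exact Or.inr ⟨by omega, h2⟩

/-- The witness word `aL(t-1)^{d(t-1)} ... aL(0)^{d 0}`. -/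
noncomputable def Wd (d : ℕ → ℕ) : ℕ → List σ
  | 0 => []
  | t + 1 => List.replicate (d t) (aL t) ++ Wd d t

lemma singleton_mem_Bt (t : ℕ) : [aL (σ := σ) t] ∈ Pset (Bt t) :=
  ⟨[], [aL t], fun a ha => absurd ha List.not_mem_nil,
    ⟨[aL t], [], List.Sublist.refl _, rfl, by simp⟩, rfl⟩

lemma repl_mem_rep (t : ℕ) : ∀ m : ℕ,
    List.replicate m (aL (σ := σ) t) ∈ Pset (rep (Bt t) m) := by
  intro m
  induction m with
  | zero => rfl
  | succ m ih =>
      have : rep (Bt (σ := σ) t) (m+1) = Bt t ++ rep (Bt t) m := rfl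
      rw [this, List.replicate_succ, show (aL (σ := σ) t) :: List.replicate m (aL t)
        = [aL t] ++ List.replicate m (aL t) from rfl]
      exact mem_Pset_append (singleton_mem_Bt t) ih

lemma Wd_mem (d : ℕ → ℕ) : ∀ t : ℕ, Wd (σ := σ) d t ∈ Pset (gP d t) := by
  intro t
  induction t with
  | zero => rfl
  | succ t ih => exact mem_Pset_append (repl_mem_rep t (d t)) ih

lemma Wd_letters (d : ℕ → ℕ) : ∀ t : ℕ, ∀ a ∈ Wd (σ := σ) d t, ∃ k, k < t ∧ a = aL k := by
  intro t
  induction t with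
  | zero => intro a ha; cases ha
  | succ t ih =>
      intro a ha
      rcases List.mem_append.1 ha with ha | ha
      · exact ⟨t, Nat.lt_succ_self t, List.eq_of_mem_replicate ha⟩
      · obtain ⟨k, hk, he⟩ := ih a ha
        exact ⟨k, hk.trans (Nat.lt_succ_self t), he⟩

lemma aL_not_mem_Wd {d : ℕ → ℕ} {t : ℕ} (ht : t < Fintype.card σ) :
    aL (σ := σ) t ∉ Wd d t := by
  intro h
  obtain ⟨k, hk, he⟩ := Wd_letters d t _ h
  have h1 : ((Fintype.equivFin σ) (aL (σ := σ) t) : ℕ) = t := eF_aL ht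
  have h2 : ((Fintype.equivFin σ) (aL (σ := σ) k) : ℕ) = k := eF_aL (by omega)
  rw [he, h2] at h1
  omega

/-- Lexicographic comparison from membership of the witness word. -/
lemma Wd_mem_le {c d : ℕ → ℕ} : ∀ t, t ≤ Fintype.card σ →
    Wd (σ := σ) d t ∈ Pset (gP c t) →
    (∀ k < t, d k = c k) ∨ (∃ s, s < t ∧ d s < c s ∧ ∀ k, s < k → k < t → d k = c k) := by
  intro t
  induction t with
  | zero => intro _ _; exact Or.inl (fun k hk => by omega)
  | succ t ih =>
      intro ht hmem
      have hstrip := strip (t := t) (by omega)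
        (fun x hx => gP_no_top (by omega) hx) (c t) (d t) (Wd d t)
        (aL_not_mem_Wd (by omega)) hmem
      rcases hstrip with h1 | ⟨h1, h2⟩
      · exact Or.inr ⟨t, Nat.lt_succ_self t, h1, fun k hk1 hk2 => by omega⟩
      · rcases ih (by omega) h2 with hall | ⟨s, hs1, hs2, hs3⟩
        · refine Or.inl ?_
          intro k hk
          rcases Nat.lt_succ_iff_lt_or_eq.1 hk with hk | rfl
          · exact hall k hk
          · exact h1
        · refine Or.inr ⟨s, by omega, hs2, ?_⟩
          intro k hk1 hk2
          rcases Nat.lt_succ_iff_lt_or_eq.1 hk2 with hk | rfl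
          · exact hs3 k hk1 hk
          · exact h1

/-- The ideal attached to a digit vector. -/
noncomputable def gI (c : ℕ → ℕ) : Idl (Words σ) :=
  ⟨Pset (gP (σ := σ) c (Fintype.card σ)), isIdeal_Pset _⟩

lemma gI_lt {c d : ℕ → ℕ}
    (h : ∃ t, t < Fintype.card σ ∧ c t < d t ∧
      ∀ k, t < k → k < Fintype.card σ → c k = d k) :
    gI (σ := σ) c < gI d := by
  obtain ⟨t, ht, hcd, heq⟩ := h
  have hsub : Pset (gP (σ := σ) c (Fintype.card σ)) ⊆ Pset (gP d (Fintype.card σ)) :=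
    gP_mono ht hcd heq (Fintype.card σ) ht le_rfl
  rw [idl_lt_iff]
  refine ⟨hsub, fun hsub' => ?_⟩
  have hmem : Wd (σ := σ) d (Fintype.card σ) ∈ Pset (gP c (Fintype.card σ)) :=
    hsub' (Wd_mem d _)
  rcases Wd_mem_le _ le_rfl hmem with hall | ⟨s, hs1, hs2, hs3⟩
  · have := hall t ht; omega
  · rcases lt_trichotomy s t with hst | rfl | hst
    · have := hs3 t hst ht; omega
    · omega
    · have := heq s hst hs1; omega

/-- The top ideal: all words. -/
noncomputable def topI : Idl (Words σ) :=
  ⟨Set.univ, ⟨[], trivial⟩, fun _ _ _ _ => trivial,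
    fun x _ y _ => ⟨List.append x y, trivial, List.sublist_append_left x y,
      List.sublist_append_right x y⟩⟩

lemma gI_ne_top (c : ℕ → ℕ) : gI (σ := σ) c ≠ topI := by
  intro h
  have hval : Pset (gP (σ := σ) c (Fintype.card σ)) = (Set.univ : Set (Words σ)) :=
    congrArg Subtype.val h
  have hpos : 0 < Fintype.card σ := Fintype.card_pos
  have hmem : List.replicate (c (Fintype.card σ - 1) + 1) (aL (σ := σ) (Fintype.card σ - 1)) ++ []
      ∈ Pset (gP c (Fintype.card σ)) := by
    rw [hval]; trivial
  have hgp : gP (σ := σ) c (Fintype.card σ)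
      = rep (Bt (Fintype.card σ - 1)) (c (Fintype.card σ - 1)) ++ gP c (Fintype.card σ - 1) := by
    conv_lhs => rw [show Fintype.card σ = (Fintype.card σ - 1) + 1 by omega]
    rfl
  rw [hgp] at hmem
  have := strip (t := Fintype.card σ - 1) (by omega)
    (fun x hx => gP_no_top (by omega) hx) (c (Fintype.card σ - 1)) (c (Fintype.card σ - 1) + 1) []
    List.not_mem_nil hmem
  rcases this with h1 | ⟨h1, _⟩ <;> omega

/-- Extraction of the leading digit difference. -/
lemma digits_lt {n : ℕ} {c d : ℕ → ℕ} (h : vfun n c < vfun n d) :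
    ∃ t, t < n ∧ c t < d t ∧ ∀ k, t < k → k < n → c k = d k := by
  classical
  by_cases hall : ∀ k, k < n → c k = d k
  · exact absurd (vfun_congr hall) (ne_of_lt h)
  · push_neg at hall
    obtain ⟨k₀, hk₀, hne⟩ := hall
    set s := Nat.findGreatest (fun k => ¬ c k = d k) (n-1) with hs
    have hPs : ¬ c s = d s :=
      Nat.findGreatest_spec (P := fun k => ¬ c k = d k) (m := k₀) (by omega) hne
    have hsn : s < n := by
      have : s ≤ n - 1 := Nat.findGreatest_le _
      omega
    have hhi : ∀ k, s < k → k < n → c k = d k := by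
      intro k h1 h2
      have := Nat.findGreatest_is_greatest (P := fun k => ¬ c k = d k)
        (n := n - 1) (hs ▸ h1) (by omega)
      exact not_not.1 this
    rcases lt_trichotomy (c s) (d s) with hcs | hcs | hcs
    · exact ⟨s, hsn, hcs, hhi⟩
    · exact absurd hcs hPs
    · exact absurd (vfun_lt ⟨s, hsn, hcs, fun k hk1 hk2 => (hhi k hk1 hk2).symm⟩)
        (lt_asymm h)

lemma rank_lower : ∀ (α : Ordinal), α < omega0 ^ (Fintype.card σ : Ordinal) →
    ∀ c : ℕ → ℕ, vfun (Fintype.card σ) c = α →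
      α ≤ ((wf_idl (σ := σ)).apply (gI c)).rank := by
  intro α
  induction α using Ordinal.induction with
  | h α IH =>
      intro hα c hc
      by_contra hcon
      push_neg at hcon
      obtain ⟨c', hc'⟩ := vfun_surj (Fintype.card σ) _ (hcon.trans hα)
      have hlt : gI (σ := σ) c' < gI c := by
        apply gI_lt
        apply digits_lt
        rw [hc, hc']
        exact hcon
      have h1 : ((wf_idl (σ := σ)).apply (gI c)).rank
          ≤ ((wf_idl (σ := σ)).apply (gI c')).rank :=
        IH _ hcon (hcon.trans hα) c' hc'
      have h2 := Acc.rank_lt_of_rel ((wf_idl (σ := σ)).apply (gI c)) hlt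
      exact absurd (h1.trans_lt h2) (lt_irrefl _)

lemma top_rank_ge :
    omega0 ^ (Fintype.card σ : Ordinal) ≤ ((wf_idl (σ := σ)).apply topI).rank := by
  by_contra hcon
  push_neg at hcon
  obtain ⟨c, hc⟩ := vfun_surj (Fintype.card σ) _ hcon
  have h1 := rank_lower _ hcon c hc
  have hlt : gI (σ := σ) c < topI :=
    lt_of_le_of_ne (idl_le_iff.2 (Set.subset_univ _)) (gI_ne_top c)
  have h2 := Acc.rank_lt_of_rel ((wf_idl (σ := σ)).apply topI) hlt
  exact absurd (h1.trans_lt h2) (lt_irrefl _)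

end LowerBound

end RankWords

/-- For a finite nonempty alphabet `σ`, the rank of the set of ideals of
`(σ*, ⪯)` ordered by inclusion is `ω^|σ| + 1`. -/
theorem rank_ideals_words {σ : Type*} [Fintype σ] [Nonempty σ] :
    (⨆ I : Idl (Words σ), Order.succ (rk I)) =
      Ordinal.omega0 ^ (Fintype.card σ : Ordinal) + 1 := by
  classical
  have hwf := RankWords.wf_idl (σ := σ)
  have hrk : ∀ I : Idl (Words σ), rk I = (hwf.apply I).rank := by
    intro I
    simp only [rk]
    rw [dif_pos hwf]
  have htop : ((hwf.apply RankWords.topI).rank)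
      = Ordinal.omega0 ^ (Fintype.card σ : Ordinal) :=
    _root_.le_antisymm (RankWords.rank_le_top RankWords.topI) (RankWords.top_rank_ge (σ := σ))
  apply _root_.le_antisymm
  · apply Ordinal.iSup_le
    intro I
    rw [hrk I, Ordinal.add_one_eq_succ]
    exact Order.succ_le_succ (htop ▸ RankWords.rank_le_top I)
  · have hle := Ordinal.le_iSup (fun I : Idl (Words σ) => Order.succ (rk I)) RankWords.topI
    refine le_trans ?_ hle
    rw [hrk, htop, Ordinal.add_one_eq_succ]
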